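/- arXiv:2304.11665 — 6 statements merged into one kernel-verified Lean document; each statement's English description precedes it below -/
import Mathlib

section
/- Let n ≥ 1, L > 0, and let f_1, …, f_n : ℝ^d → ℝ be convex differentiable functions whose gradients are L-Lipschitz. Set F = (1/n) Σ_{i=1}^n f_i. For y, x̃ ∈ ℝ^d and each i define the variance-reduced gradient v_i = ∇F(x̃) + ∇f_i(y) − ∇f_i(x̃). Then (1/n) Σ_{i=1}^{n} (1/(2L)) ‖∇F(y) − v_i‖² ≤ F(x̃) − F(y) − ⟨∇F(y), x̃ − y⟩. -/
open scoped RealInnerProductSpace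

section Helpers

variable {E : Type*} [NormedAddCommGroup E] [InnerProductSpace ℝ E] [CompleteSpace E]

lemma line_hasDerivAt (f : E → ℝ) (hf : Differentiable ℝ f) (a v : E) (t : ℝ) :
    HasDerivAt (fun s : ℝ => f (a + s • v)) ⟪gradient f (a + t • v), v⟫ t := by
  have hline : HasDerivAt (fun s : ℝ => a + s • v) v t := by
    simpa using ((hasDerivAt_id t).smul_const v).const_add a
  have hgrad := (hf (a + t • v)).hasGradientAt.hasFDerivAt
  have := hgrad.comp_hasDerivAt t hline
  simp [InnerProductSpace.toDual_apply_apply] at this ⊢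
  exact this

/-- Descent lemma for L-Lipschitz-gradient functions. -/
lemma descent_lemma (f : E → ℝ) (hf : Differentiable ℝ f) (L : ℝ) (hL : 0 < L)
    (hlip : ∀ x y, ‖gradient f x - gradient f y‖ ≤ L * ‖x - y‖) (a b : E) :
    f b ≤ f a + ⟪gradient f a, b - a⟫ + L / 2 * ‖b - a‖ ^ 2 := by
  set v := b - a with hv
  set φ : ℝ → ℝ := fun t => f (a + t • v) - t * ⟪gradient f a, v⟫ - L / 2 * t ^ 2 * ‖v‖ ^ 2
    with hφ
  have hder : ∀ t : ℝ, HasDerivAt φ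
      (⟪gradient f (a + t • v), v⟫ - ⟪gradient f a, v⟫ - L * t * ‖v‖ ^ 2) t := by
    intro t
    have h1 := line_hasDerivAt f hf a v t
    have h2 : HasDerivAt (fun s : ℝ => s * ⟪gradient f a, v⟫) ⟪gradient f a, v⟫ t := by
      simpa using (hasDerivAt_id t).mul_const ⟪gradient f a, v⟫
    have h3 : HasDerivAt (fun s : ℝ => L / 2 * s ^ 2 * ‖v‖ ^ 2) (L * t * ‖v‖ ^ 2) t := by
      have : HasDerivAt (fun s : ℝ => s ^ 2) (2 * t) t := by
        simpa using hasDerivAt_pow 2 t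
      have := ((this.const_mul (L / 2)).mul_const (‖v‖ ^ 2))
      exact this.congr_deriv (by ring)
    have := (h1.sub h2).sub h3
    simp [hφ, mul_assoc] at this ⊢
    exact this
  have hmono : AntitoneOn φ (Set.Icc 0 1) := by
    apply antitoneOn_of_deriv_nonpos (convex_Icc 0 1)
    · exact fun t _ => ((hder t).continuousAt).continuousWithinAt
    · exact fun t _ => ((hder t).differentiableAt).differentiableWithinAt
    · intro t ht
      rw [interior_Icc] at ht
      rw [(hder t).deriv]
      have h4 : ⟪gradient f (a + t • v) - gradient f a, v⟫ ≤ L * t * ‖v‖ ^ 2 := by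
        calc ⟪gradient f (a + t • v) - gradient f a, v⟫
            ≤ ‖gradient f (a + t • v) - gradient f a‖ * ‖v‖ := real_inner_le_norm _ _
          _ ≤ (L * ‖(a + t • v) - a‖) * ‖v‖ := by
              gcongr; exact hlip _ _
          _ = L * t * ‖v‖ ^ 2 := by
              rw [add_sub_cancel_left, norm_smul, Real.norm_eq_abs,
                abs_of_pos ht.1]; ring
      rw [inner_sub_left] at h4
      linarith
  have key := hmono (Set.left_mem_Icc.2 zero_le_one) (Set.right_mem_Icc.2 zero_le_one)
    zero_le_one
  simp only [hφ, zero_smul, add_zero, one_smul, one_pow, mul_one, zero_pow, zero_mul,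
    mul_zero, sub_zero, one_mul] at key
  have : a + v = b := by rw [hv]; abel
  rw [this] at key
  linarith

/-- First-order condition for convexity. -/
lemma convex_first_order (f : E → ℝ) (hc : ConvexOn ℝ Set.univ f)
    (hf : Differentiable ℝ f) (y z : E) :
    f y + ⟪gradient f y, z - y⟫ ≤ f z := by
  set g : ℝ → ℝ := fun t => f (y + t • (z - y)) with hg
  have hgc : ConvexOn ℝ Set.univ g := by
    have h := hc.comp_affineMap (AffineMap.lineMap y z : ℝ →ᵃ[ℝ] E)
    have he : g = f ∘ (AffineMap.lineMap y z : ℝ →ᵃ[ℝ] E) := by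
      funext t
      simp only [hg, Function.comp_apply, AffineMap.lineMap_apply, vsub_eq_sub, vadd_eq_add]
      congr 1
      abel
    rw [he]
    simpa using h
  have hder : HasDerivAt g ⟪gradient f y, z - y⟫ 0 := by
    have := line_hasDerivAt f hf y (z - y) 0
    simpa using this
  have := hgc.le_slope_of_hasDerivAt (Set.mem_univ (0:ℝ)) (Set.mem_univ (1:ℝ))
    one_pos hder
  rw [slope_def_field] at this
  simp only [hg, zero_smul, add_zero, one_smul] at this
  have hz : y + (z - y) = z := by abel
  rw [hz] at this
  have h1 : (f z - f y) / (1 - 0) = f z - f y := by norm_num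
  linarith [this, h1]

/-- Co-coercivity-type bound for convex L-smooth functions. -/
lemma cocoercive (f : E → ℝ) (hc : ConvexOn ℝ Set.univ f) (hf : Differentiable ℝ f)
    (L : ℝ) (hL : 0 < L)
    (hlip : ∀ x y, ‖gradient f x - gradient f y‖ ≤ L * ‖x - y‖) (y x : E) :
    1 / (2 * L) * ‖gradient f x - gradient f y‖ ^ 2
      ≤ f x - f y - ⟪gradient f y, x - y⟫ := by
  set w := gradient f x - gradient f y with hw
  set z := x - (1 / L) • w with hz
  have hd := descent_lemma f hf L hL hlip x z
  have hfo := convex_first_order f hc hf y z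
  have hzx : z - x = -((1 / L) • w) := by rw [hz]; abel
  have hnorm : ‖z - x‖ ^ 2 = (1 / L) ^ 2 * ‖w‖ ^ 2 := by
    rw [hzx, norm_neg, norm_smul, Real.norm_eq_abs, abs_of_pos (by positivity : (0:ℝ) < 1 / L),
      mul_pow]
  have hzy : z - y = (x - y) - (1 / L) • w := by rw [hz]; abel
  have hinner1 : ⟪gradient f x, z - x⟫ = -(1 / L) * ⟪gradient f x, w⟫ := by
    rw [hzx, inner_neg_right, real_inner_smul_right]; ring
  have hinner2 : ⟪gradient f y, z - y⟫
      = ⟪gradient f y, x - y⟫ - (1 / L) * ⟪gradient f y, w⟫ := by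
    rw [hzy, inner_sub_right, real_inner_smul_right]
  have hww : ⟪gradient f x, w⟫ - ⟪gradient f y, w⟫ = ‖w‖ ^ 2 := by
    rw [← inner_sub_left, ← hw, real_inner_self_eq_norm_sq]
  rw [hinner1, hnorm] at hd
  rw [hinner2] at hfo
  have hL' : L ≠ 0 := ne_of_gt hL
  have : f x - f y - ⟪gradient f y, x - y⟫
      ≥ (1 / L) * (⟪gradient f x, w⟫ - ⟪gradient f y, w⟫) - L / 2 * ((1 / L) ^ 2 * ‖w‖ ^ 2) := by
    linarith
  rw [hww] at this
  have heq : (1 / L) * ‖w‖ ^ 2 - L / 2 * ((1 / L) ^ 2 * ‖w‖ ^ 2) = 1 / (2 * L) * ‖w‖ ^ 2 := by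
    field_simp; ring
  linarith

end Helpers

/-- SVRG variance bound: for convex `L`-smooth components `f_i` with average `F`
and variance-reduced gradients `v_i = ∇F(x̃) + ∇f_i(y) − ∇f_i(x̃)`,
`(1/n) Σ_i (1/(2L)) ‖∇F(y) − v_i‖² ≤ F(x̃) − F(y) − ⟨∇F(y), x̃ − y⟩`. -/
theorem svrg_variance_bound (d n : ℕ) (hn : 1 ≤ n) (L : ℝ) (hL : 0 < L)
    (f : Fin n → EuclideanSpace ℝ (Fin d) → ℝ)
    (hconv : ∀ i, ConvexOn ℝ Set.univ (f i))
    (hdiff : ∀ i, Differentiable ℝ (f i))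
    (hlip : ∀ i x y, ‖gradient (f i) x - gradient (f i) y‖ ≤ L * ‖x - y‖)
    (F : EuclideanSpace ℝ (Fin d) → ℝ)
    (hF : ∀ x, F x = (1 / (n : ℝ)) * ∑ i, f i x)
    (y xt : EuclideanSpace ℝ (Fin d))
    (v : Fin n → EuclideanSpace ℝ (Fin d))
    (hv : ∀ i, v i = gradient F xt + gradient (f i) y - gradient (f i) xt) :
    (1 / (n : ℝ)) * ∑ i, (1 / (2 * L)) * ‖gradient F y - v i‖ ^ 2
      ≤ F xt - F y - ⟪gradient F y, xt - y⟫ := by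
  have hn0 : (0:ℝ) < n := by exact_mod_cast hn
  -- gradient of F
  have hgradF : ∀ x, HasGradientAt F ((1 / (n:ℝ)) • ∑ i, gradient (f i) x) x := by
    intro x
    have hFe : F = fun x => (1 / (n : ℝ)) * ∑ i, f i x := funext hF
    rw [hFe]
    have hsum : HasFDerivAt (fun x => ∑ i, f i x)
        (∑ i, InnerProductSpace.toDual ℝ _ (gradient (f i) x)) x :=
      HasFDerivAt.fun_sum fun i _ => ((hdiff i) x).hasGradientAt.hasFDerivAt
    have := hsum.const_mul (1 / (n:ℝ))
    rw [hasGradientAt_iff_hasFDerivAt]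
    refine this.congr_fderiv ?_
    simp [map_smul, map_sum, smul_smul]
  have hGF : ∀ x, gradient F x = (1 / (n:ℝ)) • ∑ i, gradient (f i) x :=
    fun x => (hgradF x).gradient
  set a : Fin n → EuclideanSpace ℝ (Fin d) :=
    fun i => gradient (f i) xt - gradient (f i) y with ha
  set abar : EuclideanSpace ℝ (Fin d) := gradient F xt - gradient F y with habar
  have habar' : abar = (1 / (n:ℝ)) • ∑ i, a i := by
    rw [habar, hGF, hGF, ha, ← smul_sub, Finset.sum_sub_distrib]
  have hkey : ∀ i, gradient F y - v i = a i - abar := by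
    intro i
    rw [hv, ha, habar]
    abel
  -- variance ≤ second moment
  have hvar : ∑ i, ‖a i - abar‖ ^ 2 ≤ ∑ i, ‖a i‖ ^ 2 := by
    have hexp : ∀ i, ‖a i - abar‖ ^ 2 = ‖a i‖ ^ 2 - 2 * ⟪a i, abar⟫ + ‖abar‖ ^ 2 :=
      fun i => norm_sub_sq_real _ _
    have hsum : ∑ i, ⟪a i, abar⟫ = (n:ℝ) * ‖abar‖ ^ 2 := by
      rw [← sum_inner]
      have : (∑ i, a i) = (n:ℝ) • abar := by
        rw [habar', smul_smul, mul_one_div, div_self (ne_of_gt hn0), one_smul]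
      rw [this, real_inner_smul_left, real_inner_self_eq_norm_sq]
    calc ∑ i, ‖a i - abar‖ ^ 2
        = ∑ i, ‖a i‖ ^ 2 - 2 * ((n:ℝ) * ‖abar‖ ^ 2) + (n:ℝ) * ‖abar‖ ^ 2 := by
          simp only [hexp, Finset.sum_add_distrib, Finset.sum_sub_distrib,
            ← Finset.mul_sum, hsum, Finset.sum_const, Finset.card_univ, Fintype.card_fin,
            nsmul_eq_mul]
          try ring
      _ = ∑ i, ‖a i‖ ^ 2 - (n:ℝ) * ‖abar‖ ^ 2 := by ring
      _ ≤ ∑ i, ‖a i‖ ^ 2 := by nlinarith [sq_nonneg ‖abar‖]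
  -- per-component bound
  have hper : ∀ i, 1 / (2 * L) * ‖a i‖ ^ 2
      ≤ f i xt - f i y - ⟪gradient (f i) y, xt - y⟫ :=
    fun i => cocoercive (f i) (hconv i) (hdiff i) L hL (hlip i) y xt
  -- RHS decomposition
  have hRHS : F xt - F y - ⟪gradient F y, xt - y⟫
      = (1 / (n:ℝ)) * ∑ i, (f i xt - f i y - ⟪gradient (f i) y, xt - y⟫) := by
    rw [hF, hF, hGF, real_inner_smul_left, sum_inner]
    simp only [Finset.sum_sub_distrib]
    ring
  rw [hRHS]
  have h2L : (0:ℝ) < 2 * L := by linarith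
  apply mul_le_mul_of_nonneg_left _ (by positivity : (0:ℝ) ≤ 1 / (n:ℝ))
  calc ∑ i, 1 / (2 * L) * ‖gradient F y - v i‖ ^ 2
      = 1 / (2 * L) * ∑ i, ‖a i - abar‖ ^ 2 := by
        rw [Finset.mul_sum]; exact Finset.sum_congr rfl fun i _ => by rw [hkey]
    _ ≤ 1 / (2 * L) * ∑ i, ‖a i‖ ^ 2 := by
        apply mul_le_mul_of_nonneg_left hvar (by positivity)
    _ = ∑ i, 1 / (2 * L) * ‖a i‖ ^ 2 := by rw [Finset.mul_sum]
    _ ≤ ∑ i, (f i xt - f i y - ⟪gradient (f i) y, xt - y⟫) :=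
        Finset.sum_le_sum fun i _ => hper i
end

section
/- Let d = B·Ω with B, Ω positive integers and let n ≥ 1. Let f_1,…,f_n : ℝ^d → ℝ be convex differentiable functions that are L-smooth (L > 0), set F = (1/n)Σ_i f_i, and assume F is L_B-block-smooth with respect to the block partition. Let P : ℝ^d → ℝ be block-separable, convex, and μ-strongly convex (μ ≥ 0). Let α_1, α_2, α_3 > 0 with α_1 + α_2 + α_3 = 1, and set L̄ = L/(B α_3) + L_B, η = 1/(L̄ α_2 B), ρ = α_2² B² L̄ + (B−1) μ α_2, θ = 1 + μ α_2 / ρ. Fix x', z', x̃, x⋆ ∈ ℝ^d and set y = α_1 x' + α_2 z' + α_3 x̃. For each i ∈ {1,…,n} let v_i = ∇F(x̃) + ∇f_i(y) − ∇f_i(x̃), let z̃_i minimize z ↦ (1/(2η))‖z − (z' − η v_i)‖² + P(z) over ℝ^d, and for each block l define z_{i,l} ∈ ℝ^d by [z_{i,l}]_l = [z̃_i]_l and [z_{i,l}]_{l'} = [z']_{l'} for l' ≠ l, and x_{i,l} = y + α_2 B (z_{i,l} − z'). Then (1/(nB)) Σ_{i,l} F(x_{i,l}) + (α_2/n) Σ_i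 P(z̃_i) + α_3 P(x̃) + θ·(ρ/2)·(1/(nB)) Σ_{i,l} ‖x⋆ − z_{i,l}‖² ≤ α_1 F(x') + α_3 (F(x̃) + P(x̃)) + α_2 (F(x⋆) + P(x⋆)) + (ρ/2) ‖x⋆ − z'‖². -/
open scoped RealInnerProductSpace

/-- The `l`-th block of a vector in `ℝ^d` with `d = B·Ω`. -/
noncomputable def blockOf {B Ω : ℕ} (x : EuclideanSpace ℝ (Fin B × Fin Ω)) (l : Fin B) :
    EuclideanSpace ℝ (Fin Ω) := WithLp.toLp 2 (fun o => x (l, o))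

section AuxADSG

variable {E : Type*} [NormedAddCommGroup E] [InnerProductSpace ℝ E] [CompleteSpace E]

lemma adsg_inner_grad_le {f : E → ℝ} (hc : ConvexOn ℝ Set.univ f) (hd : Differentiable ℝ f)
    (x u : E) : ⟪gradient f x, u - x⟫ ≤ f u - f x := by
  have hline : HasDerivAt (fun t : ℝ => x + t • (u - x)) (u - x) 0 := by
    simpa using ((hasDerivAt_id (0 : ℝ)).smul_const (u - x)).const_add x
  have hfd : HasFDerivAt f (InnerProductSpace.toDual ℝ E (gradient f x)) x :=
    ((hd x).hasGradientAt).hasFDerivAt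
  have hfd2 : HasFDerivAt f (InnerProductSpace.toDual ℝ E (gradient f x))
      ((fun t : ℝ => x + t • (u - x)) 0) := by simpa using hfd
  have hcomp : HasDerivAt (fun t : ℝ => f (x + t • (u - x))) ⟪gradient f x, u - x⟫ 0 := by
    have := hfd2.comp_hasDerivAt 0 hline
    rw [InnerProductSpace.toDual_apply_apply] at this
    exact this
  have h2 : Filter.Tendsto (slope (fun t : ℝ => f (x + t • (u - x))) 0)
      (nhdsWithin 0 (Set.Ioi 0)) (nhds ⟪gradient f x, u - x⟫) :=
    (hasDerivAt_iff_tendsto_slope.mp hcomp).mono_left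
      (nhdsWithin_mono 0 fun t ht => ne_of_gt ht)
  refine le_of_tendsto h2 ?_
  filter_upwards [Ioo_mem_nhdsGT_of_mem (by norm_num : (0:ℝ) ∈ Set.Ico 0 1)] with t ht
  have h01 : (0:ℝ) < t := ht.1
  have hxt : x + t • (u - x) = (1 - t) • x + t • u := by module
  have hcv := hc.2 (Set.mem_univ x) (Set.mem_univ u)
    (by linarith [ht.2] : (0:ℝ) ≤ 1 - t) h01.le (by ring)
  rw [smul_eq_mul, smul_eq_mul] at hcv
  rw [slope_def_field, hxt]
  have h0 : x + (0:ℝ) • (u - x) = x := by simp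
  rw [h0, sub_zero, div_le_iff₀ h01]
  nlinarith [hcv]

lemma adsg_cocoercive {f : E → ℝ} (hc : ConvexOn ℝ Set.univ f) (hd : Differentiable ℝ f)
    {L : ℝ} (hL : 0 < L)
    (hsm : ∀ x v : E, f (x + v) ≤ f x + ⟪gradient f x, v⟫ + L / 2 * ‖v‖ ^ 2)
    (a b : E) :
    ‖gradient f a - gradient f b‖ ^ 2 ≤ 2 * L * (f b - f a - ⟪gradient f a, b - a⟫) := by
  set G := gradient f b - gradient f a with hG
  have h1 := adsg_inner_grad_le hc hd a (b + (-(1/L)) • G)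
  have h2 := hsm b ((-(1/L)) • G)
  have hsplit : b + (-(1/L)) • G - a = (b - a) + (-(1/L)) • G := by abel
  have hinner1 : ⟪gradient f a, b + (-(1/L)) • G - a⟫
      = ⟪gradient f a, b - a⟫ - (1/L) * ⟪gradient f a, G⟫ := by
    rw [hsplit, inner_add_right, real_inner_smul_right]; ring
  have hgb : gradient f b = G + gradient f a := by rw [hG]; abel
  have hinner2 : ⟪gradient f b, (-(1/L)) • G⟫
      = -(1/L) * (⟪G, G⟫ + ⟪gradient f a, G⟫) := by
    rw [real_inner_smul_right, hgb, inner_add_left]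
  have hGG : ⟪G, G⟫ = ‖G‖ ^ 2 := real_inner_self_eq_norm_sq G
  have hnsq : ‖(-(1/L)) • G‖ ^ 2 = (1/L)^2 * ‖G‖ ^ 2 := by
    have hns : ‖(-(1/L)) • G‖ = (1/L) * ‖G‖ := by
      rw [norm_smul, Real.norm_eq_abs, abs_neg, abs_of_pos (by positivity)]
    rw [hns, mul_pow]
  rw [hinner1] at h1
  rw [hinner2, hnsq, hGG] at h2
  have hcomb : ⟪gradient f a, b - a⟫
      ≤ f b - f a - (1/L) * ‖G‖^2 + L/2 * ((1/L)^2 * ‖G‖^2) := by linarith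
  have hscaled := mul_le_mul_of_nonneg_left hcomb (by linarith : (0:ℝ) ≤ 2*L)
  have heq : 2*L*(f b - f a - (1/L) * ‖G‖^2 + L/2 * ((1/L)^2 * ‖G‖^2))
      = 2*L*(f b - f a) - ‖G‖^2 := by field_simp; ring
  have hGnorm : ‖gradient f a - gradient f b‖ = ‖G‖ := by rw [hG, norm_sub_rev]
  rw [hGnorm]
  linarith [hscaled, heq]

lemma adsg_prox_lower {P : E → ℝ} {μ : ℝ} (hμ : 0 ≤ μ)
    (hPsc : StrongConvexOn Set.univ μ P) {η : ℝ} (hη : 0 < η)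
    (c z u : E)
    (hmin : ∀ w, 1 / (2 * η) * ‖z - c‖ ^ 2 + P z ≤ 1 / (2 * η) * ‖w - c‖ ^ 2 + P w) :
    0 ≤ 1 / η * ⟪z - c, u - z⟫ + P u - P z - μ / 2 * ‖u - z‖ ^ 2 := by
  have key : ∀ t : ℝ, 0 < t → t < 1 →
      0 ≤ (1/η * ⟪z - c, u - z⟫ + P u - P z - μ/2 * ‖u - z‖^2)
        + t * (1/(2*η) * ‖u - z‖^2 + μ/2 * ‖u - z‖^2) := by
    intro t ht0 ht1
    have hw : (1 - t) • z + t • u - c = (z - c) + t • (u - z) := by module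
    have hexp : 1/(2*η) * ‖(1 - t) • z + t • u - c‖ ^ 2
        = 1/(2*η) * ‖z - c‖ ^ 2 + t * (1/η * ⟪z - c, u - z⟫)
          + t ^ 2 * (1/(2*η) * ‖u - z‖ ^ 2) := by
      rw [hw, norm_add_sq_real, real_inner_smul_right, norm_smul, Real.norm_eq_abs,
        abs_of_pos ht0, mul_pow]
      field_simp
    have hP := hPsc.2 (Set.mem_univ z) (Set.mem_univ u)
      (by linarith : (0:ℝ) ≤ 1 - t) ht0.le (by ring)
    rw [smul_eq_mul, smul_eq_mul, norm_sub_rev z u] at hP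
    have hm := hmin ((1 - t) • z + t • u)
    rw [hexp] at hm
    have h3 : 0 ≤ t * ((1/η * ⟪z - c, u - z⟫ + P u - P z - μ/2 * ‖u - z‖^2)
        + t * (1/(2*η) * ‖u - z‖^2 + μ/2 * ‖u - z‖^2)) := by nlinarith [hm, hP]
    nlinarith [h3, ht0]
  by_contra hK
  push_neg at hK
  set K := 1/η * ⟪z - c, u - z⟫ + P u - P z - μ/2 * ‖u - z‖^2 with hKdef
  set M := 1/(2*η) * ‖u - z‖^2 + μ/2 * ‖u - z‖^2 with hMdef
  have hM : 0 ≤ M := by rw [hMdef]; positivity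
  have ht0 : 0 < min (1/2) ((-K)/(M+1)) := by
    apply lt_min (by norm_num)
    apply div_pos (by linarith) (by linarith)
  have ht1 : min (1/2) ((-K)/(M+1)) < 1 :=
    lt_of_le_of_lt (min_le_left _ _) (by norm_num)
  have hkey := key _ ht0 ht1
  have htM : min (1/2) ((-K)/(M+1)) * M ≤ ((-K)/(M+1)) * M :=
    mul_le_mul_of_nonneg_right (min_le_right _ _) hM
  have hfrac : ((-K)/(M+1)) * M < -K := by
    rw [div_mul_eq_mul_div, div_lt_iff₀ (by linarith)]
    nlinarith
  linarith

lemma adsg_normsq {ι : Type*} [Fintype ι] (x : EuclideanSpace ℝ ι) :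
    ‖x‖ ^ 2 = ∑ p, x p ^ 2 := by
  rw [EuclideanSpace.norm_eq, Real.sq_sqrt (by positivity)]
  simp [Real.norm_eq_abs, sq_abs]

end AuxADSG

set_option maxHeartbeats 2000000 in
/-- One-iteration inequality (Lemma 2) of the ADSG analysis, with the expectations over
the uniformly random sample `i` and block `l` written as explicit averages. -/
theorem adsg_one_iteration
    (B Ω n : ℕ) (hB : 0 < B) (hΩ : 0 < Ω) (hn : 1 ≤ n)
    (L LB μ : ℝ) (hL : 0 < L) (hμ : 0 ≤ μ)
    (f : Fin n → EuclideanSpace ℝ (Fin B × Fin Ω) → ℝ)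
    (hconv : ∀ i, ConvexOn ℝ Set.univ (f i))
    (hdiff : ∀ i, Differentiable ℝ (f i))
    (hsmooth : ∀ (i : Fin n) (x v : EuclideanSpace ℝ (Fin B × Fin Ω)),
      f i (x + v) ≤ f i x + ⟪gradient (f i) x, v⟫ + L / 2 * ‖v‖ ^ 2)
    (F : EuclideanSpace ℝ (Fin B × Fin Ω) → ℝ)
    (hF : ∀ x, F x = (1 / (n : ℝ)) * ∑ i, f i x)
    (hFblock : ∀ (l : Fin B) (x h : EuclideanSpace ℝ (Fin B × Fin Ω)),
      (∀ p : Fin B × Fin Ω, p.1 ≠ l → h p = 0) →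
      F (x + h) ≤ F x + ⟪gradient F x, h⟫ + LB / 2 * ‖h‖ ^ 2)
    (P : EuclideanSpace ℝ (Fin B × Fin Ω) → ℝ)
    (Pl : Fin B → EuclideanSpace ℝ (Fin Ω) → ℝ)
    (hPsep : ∀ x, P x = ∑ l : Fin B, Pl l (blockOf x l))
    (hPconv : ConvexOn ℝ Set.univ P)
    (hPsc : StrongConvexOn Set.univ μ P)
    (α1 α2 α3 : ℝ) (hα1 : 0 < α1) (hα2 : 0 < α2) (hα3 : 0 < α3)
    (hsum : α1 + α2 + α3 = 1)
    (Lbar η ρ θ : ℝ)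
    (hLbar : Lbar = L / ((B : ℝ) * α3) + LB)
    (hη : η = 1 / (Lbar * α2 * (B : ℝ)))
    (hρ : ρ = α2 ^ 2 * (B : ℝ) ^ 2 * Lbar + ((B : ℝ) - 1) * μ * α2)
    (hθ : θ = 1 + μ * α2 / ρ)
    (x' z' xt xs : EuclideanSpace ℝ (Fin B × Fin Ω))
    (y : EuclideanSpace ℝ (Fin B × Fin Ω)) (hy : y = α1 • x' + α2 • z' + α3 • xt)
    (v : Fin n → EuclideanSpace ℝ (Fin B × Fin Ω))
    (hv : ∀ i, v i = gradient F xt + gradient (f i) y - gradient (f i) xt)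
    (zt : Fin n → EuclideanSpace ℝ (Fin B × Fin Ω))
    (hzt : ∀ (i : Fin n) (u : EuclideanSpace ℝ (Fin B × Fin Ω)),
      1 / (2 * η) * ‖zt i - (z' - η • v i)‖ ^ 2 + P (zt i)
        ≤ 1 / (2 * η) * ‖u - (z' - η • v i)‖ ^ 2 + P u)
    (zil : Fin n → Fin B → EuclideanSpace ℝ (Fin B × Fin Ω))
    (hzil : ∀ (i : Fin n) (l : Fin B) (p : Fin B × Fin Ω),
      zil i l p = if p.1 = l then zt i p else z' p)
    (xil : Fin n → Fin B → EuclideanSpace ℝ (Fin B × Fin Ω))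
    (hxil : ∀ i l, xil i l = y + (α2 * (B : ℝ)) • (zil i l - z')) :
    (1 / ((n : ℝ) * (B : ℝ))) * (∑ i, ∑ l, F (xil i l))
        + (α2 / (n : ℝ)) * ∑ i, P (zt i) + α3 * P xt
        + θ * (ρ / 2) * ((1 / ((n : ℝ) * (B : ℝ))) * ∑ i, ∑ l, ‖xs - zil i l‖ ^ 2)
      ≤ α1 * F x' + α3 * (F xt + P xt) + α2 * (F xs + P xs) + ρ / 2 * ‖xs - z'‖ ^ 2 := by
  classical
  have hn0 : (0:ℝ) < n := by exact_mod_cast hn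
  have hB0 : (0:ℝ) < B := by exact_mod_cast hB
  have hB1 : (1:ℝ) ≤ B := by exact_mod_cast hB
  have hnne : (n:ℝ) ≠ 0 := ne_of_gt hn0
  have hBne : (B:ℝ) ≠ 0 := ne_of_gt hB0
  have hα3ne : α3 ≠ 0 := ne_of_gt hα3
  have hLne : L ≠ 0 := ne_of_gt hL
  have hFdef : F = fun x => (1 / (n : ℝ)) * ∑ i, f i x := funext hF
  -- `LB` is nonnegative
  have hLB0 : (0:ℝ) ≤ LB := by
    set p0 : Fin B × Fin Ω := (⟨0, hB⟩, ⟨0, hΩ⟩) with hp0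
    set h0 : EuclideanSpace ℝ (Fin B × Fin Ω) := EuclideanSpace.single p0 (1:ℝ) with hh0
    have hsupp1 : ∀ p : Fin B × Fin Ω, p.1 ≠ p0.1 → h0 p = 0 := by
      intro p hp
      rw [hh0, EuclideanSpace.single_apply, if_neg]
      intro hpe; exact hp (by rw [hpe])
    have hsupp2 : ∀ p : Fin B × Fin Ω, p.1 ≠ p0.1 → (-h0) p = 0 := by
      intro p hp
      rw [PiLp.neg_apply, hsupp1 p hp, neg_zero]
    have hmid : ∀ i : Fin n, f i 0 ≤ 1/2 * f i (0 + h0) + 1/2 * f i (0 + (-h0)) := by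
      intro i
      have h := (hconv i).2 (Set.mem_univ (0 + h0)) (Set.mem_univ (0 + (-h0)))
        (by norm_num : (0:ℝ) ≤ 1/2) (by norm_num : (0:ℝ) ≤ 1/2) (by norm_num)
      have hmide : (1/2:ℝ) • ((0:EuclideanSpace ℝ (Fin B × Fin Ω)) + h0)
          + (1/2:ℝ) • ((0:EuclideanSpace ℝ (Fin B × Fin Ω)) + (-h0)) = 0 := by module
      rw [hmide, smul_eq_mul, smul_eq_mul] at h
      exact h
    have hmidF : F 0 ≤ 1/2 * F (0 + h0) + 1/2 * F (0 + (-h0)) := by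
      rw [hF, hF, hF]
      have hs := Finset.sum_le_sum (fun i (_ : i ∈ Finset.univ) => hmid i)
      rw [Finset.sum_add_distrib, ← Finset.mul_sum, ← Finset.mul_sum] at hs
      have h2 := mul_le_mul_of_nonneg_left hs (by positivity : (0:ℝ) ≤ 1/(n:ℝ))
      linarith [h2]
    have hb1 := hFblock p0.1 0 h0 hsupp1
    have hb2 := hFblock p0.1 0 (-h0) hsupp2
    have hn1 : ‖h0‖ = 1 := by rw [hh0, EuclideanSpace.norm_single]; norm_num
    have hn2 : ‖-h0‖ = 1 := by rw [norm_neg]; exact hn1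
    have hi2 : ⟪gradient F 0, -h0⟫ = -⟪gradient F 0, h0⟫ := by rw [inner_neg_right]
    rw [hn1] at hb1
    rw [hn2, hi2] at hb2
    linarith [hmidF, hb1, hb2]
  have hLbar0 : 0 < Lbar := by
    rw [hLbar]
    have h1 : 0 < L / ((B:ℝ) * α3) := by positivity
    linarith
  have hη0 : 0 < η := by
    rw [hη]
    exact one_div_pos.mpr (mul_pos (mul_pos hLbar0 hα2) hB0)
  have hKinv : 1/η = Lbar * α2 * (B:ℝ) := by rw [hη, one_div_one_div]
  have hρ0 : 0 < ρ := by
    rw [hρ]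
    have h1 : 0 < α2 ^ 2 * (B:ℝ) ^ 2 * Lbar :=
      mul_pos (mul_pos (pow_pos hα2 2) (pow_pos hB0 2)) hLbar0
    have h2 : 0 ≤ ((B:ℝ) - 1) * μ * α2 :=
      mul_nonneg (mul_nonneg (by linarith) hμ) hα2.le
    linarith
  have hρne : ρ ≠ 0 := ne_of_gt hρ0
  -- gradient of the average
  have hgradF : ∀ w, gradient F w = (1/(n:ℝ)) • ∑ i, gradient (f i) w := by
    intro w
    have hsum1 : HasFDerivAt (fun x => ∑ i, f i x) (∑ i, fderiv ℝ (f i) w) w :=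
      HasFDerivAt.fun_sum fun i _ => (hdiff i w).hasFDerivAt
    have h2 : HasFDerivAt F ((1/(n:ℝ)) • ∑ i, fderiv ℝ (f i) w) w := by
      rw [hFdef]; exact hsum1.const_mul (1/(n:ℝ))
    have h3 := h2.hasGradientAt
    rw [h3.gradient]
    simp only [map_smul, map_sum]
    rfl
  have hsumgy : ∑ i, gradient (f i) y = (n:ℝ) • gradient F y := by
    rw [hgradF y, smul_smul, mul_one_div, div_self hnne, one_smul]
  have hsumgt : ∑ i, gradient (f i) xt = (n:ℝ) • gradient F xt := by
    rw [hgradF xt, smul_smul, mul_one_div, div_self hnne, one_smul]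
  have hsumv : ∑ i, v i = (n:ℝ) • gradient F y := by
    have h1 : ∑ i, v i = ∑ i, (gradient F xt + gradient (f i) y - gradient (f i) xt) :=
      Finset.sum_congr rfl fun i _ => hv i
    rw [h1, Finset.sum_sub_distrib, Finset.sum_add_distrib, Finset.sum_const,
      Finset.card_univ, Fintype.card_fin, ← Nat.cast_smul_eq_nsmul ℝ, hsumgy, hsumgt]
    abel
  have hsumfy : ∑ i, f i y = (n:ℝ) * F y := by rw [hF y]; field_simp
  have hsumfxt : ∑ i, f i xt = (n:ℝ) * F xt := by rw [hF xt]; field_simp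
  have hsumfxs : ∑ i, f i xs = (n:ℝ) * F xs := by rw [hF xs]; field_simp
  have hsumfx' : ∑ i, f i x' = (n:ℝ) * F x' := by rw [hF x']; field_simp
  -- first-order lower bound for F at y
  have hlow : ∀ u, ⟪gradient F y, u - y⟫ ≤ F u - F y := by
    intro u
    have h1 : ⟪gradient F y, u - y⟫ = (1/(n:ℝ)) * ∑ i, ⟪gradient (f i) y, u - y⟫ := by
      rw [hgradF y, real_inner_smul_left, sum_inner]
    have h3 : ∑ i, ⟪gradient (f i) y, u - y⟫ ≤ ∑ i, (f i u - f i y) :=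
      Finset.sum_le_sum fun i _ => adsg_inner_grad_le (hconv i) (hdiff i) y u
    have h4 : ∑ i, (f i u - f i y) = (n:ℝ)*(F u) - (n:ℝ)*(F y) := by
      rw [Finset.sum_sub_distrib]
      have hu : ∑ i, f i u = (n:ℝ) * F u := by rw [hF u]; field_simp
      rw [hu, hsumfy]
    rw [h1]
    have h5 := mul_le_mul_of_nonneg_left (le_trans h3 (le_of_eq h4))
      (by positivity : (0:ℝ) ≤ 1/(n:ℝ))
    have h6 : (1/(n:ℝ)) * ((n:ℝ)*(F u) - (n:ℝ)*(F y)) = F u - F y := by field_simp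
    linarith
  -- variance bound
  have hvar : ∑ i, ‖gradient F y - v i‖^2
      ≤ 2*L*(n:ℝ)*(F xt - F y - ⟪gradient F y, xt - y⟫) := by
    have heb : ∀ i, gradient F y - v i
        = (gradient F y - gradient F xt) - (gradient (f i) y - gradient (f i) xt) := by
      intro i; rw [hv i]; abel
    have hsume : ∑ i, (gradient (f i) y - gradient (f i) xt)
        = (n:ℝ) • (gradient F y - gradient F xt) := by
      rw [Finset.sum_sub_distrib, hsumgy, hsumgt, smul_sub]
    have hinner : ∑ i, ⟪gradient F y - gradient F xt, gradient (f i) y - gradient (f i) xt⟫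
        = (n:ℝ) * ‖gradient F y - gradient F xt‖^2 := by
      rw [← inner_sum, hsume, real_inner_smul_right, real_inner_self_eq_norm_sq]
    have hexp : ∀ i, ‖gradient F y - v i‖^2
        = ‖gradient F y - gradient F xt‖^2
          - 2*⟪gradient F y - gradient F xt, gradient (f i) y - gradient (f i) xt⟫
          + ‖gradient (f i) y - gradient (f i) xt‖^2 := by
      intro i; rw [heb i, norm_sub_sq_real]
    have hsum1 : ∑ i, ‖gradient F y - v i‖^2
        = (n:ℝ)*‖gradient F y - gradient F xt‖^2 - 2*((n:ℝ)*‖gradient F y - gradient F xt‖^2)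
          + ∑ i, ‖gradient (f i) y - gradient (f i) xt‖^2 := by
      rw [Finset.sum_congr rfl fun i _ => hexp i, Finset.sum_add_distrib,
        Finset.sum_sub_distrib, Finset.sum_const, Finset.card_univ, Fintype.card_fin,
        ← Finset.mul_sum, hinner, nsmul_eq_mul]
    have hs3 := Finset.sum_le_sum fun i (_ : i ∈ Finset.univ) =>
      adsg_cocoercive (hconv i) (hdiff i) hL (hsmooth i) y xt
    have hsum2 : ∑ i, (2*L*(f i xt - f i y - ⟪gradient (f i) y, xt - y⟫))
        = 2*L*((n:ℝ)*F xt - (n:ℝ)*F y - (n:ℝ)*⟪gradient F y, xt - y⟫) := by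
      rw [← Finset.mul_sum]
      congr 1
      rw [Finset.sum_sub_distrib, Finset.sum_sub_distrib, ← sum_inner, hsumgy,
        real_inner_smul_left, hsumfxt, hsumfy]
    rw [hsum2] at hs3
    linarith [hsum1, hs3, mul_nonneg hn0.le (sq_nonneg ‖gradient F y - gradient F xt‖)]
  -- coordinate identities
  have hW2 : ‖xs - z'‖^2 = ∑ p, (xs p - z' p)^2 := by
    rw [adsg_normsq]
    exact Finset.sum_congr rfl fun p _ => by rw [PiLp.sub_apply]
  have hT2 : ∀ i, ‖xs - zt i‖^2 = ∑ p, (xs p - zt i p)^2 := by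
    intro i
    rw [adsg_normsq]
    exact Finset.sum_congr rfl fun p _ => by rw [PiLp.sub_apply]
  have hS2 : ∀ i, ‖zt i - z'‖^2 = ∑ p, (zt i p - z' p)^2 := by
    intro i
    rw [adsg_normsq]
    exact Finset.sum_congr rfl fun p _ => by rw [PiLp.sub_apply]
  have hSb : ∀ i, ∑ l, ‖zil i l - z'‖^2 = ‖zt i - z'‖^2 := by
    intro i
    have h1 : ∀ l, ‖zil i l - z'‖^2 = ∑ p, (if p.1 = l then zt i p - z' p else 0)^2 := by
      intro l
      rw [adsg_normsq]
      refine Finset.sum_congr rfl fun p _ => ?_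
      rw [PiLp.sub_apply, hzil i l p]
      by_cases hp : p.1 = l
      · simp [hp]
      · simp [hp]
    rw [Finset.sum_congr rfl fun l _ => h1 l, Finset.sum_comm, hS2 i]
    refine Finset.sum_congr rfl fun p _ => ?_
    have h2 : ∀ l, (if p.1 = l then zt i p - z' p else 0)^2
        = if p.1 = l then (zt i p - z' p)^2 else 0 := by
      intro l; split <;> simp
    rw [Finset.sum_congr rfl fun l _ => h2 l, Finset.sum_ite_eq]
    simp
  have hc_i : ∀ i, ∑ l, ‖xs - zil i l‖^2 = ((B:ℝ)-1)*‖xs - z'‖^2 + ‖xs - zt i‖^2 := by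
    intro i
    have h1 : ∀ l, ‖xs - zil i l‖^2 = ∑ p, ((xs p - z' p)^2
        + (if p.1 = l then (xs p - zt i p)^2 - (xs p - z' p)^2 else 0)) := by
      intro l
      rw [adsg_normsq]
      refine Finset.sum_congr rfl fun p _ => ?_
      rw [PiLp.sub_apply, hzil i l p]
      by_cases hp : p.1 = l
      · simp [hp]
      · simp [hp]
    rw [Finset.sum_congr rfl fun l _ => h1 l, Finset.sum_comm]
    have h2 : ∀ p : Fin B × Fin Ω, ∑ l, ((xs p - z' p)^2
        + (if p.1 = l then (xs p - zt i p)^2 - (xs p - z' p)^2 else 0))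
        = ((B:ℝ)-1)*(xs p - z' p)^2 + (xs p - zt i p)^2 := by
      intro p
      rw [Finset.sum_add_distrib, Finset.sum_const, Finset.sum_ite_eq, Finset.card_univ,
        Fintype.card_fin, nsmul_eq_mul]
      simp only [Finset.mem_univ, if_true]
      ring
    rw [Finset.sum_congr rfl fun p _ => h2 p, Finset.sum_add_distrib, ← Finset.mul_sum,
      ← hW2, ← hT2 i]
  -- per-sample inequality
  have hPerI : ∀ i : Fin n,
      ∑ l, F (xil i l) + (α2*(B:ℝ))*P (zt i)
        + (α2*(B:ℝ)*((Lbar*α2*(B:ℝ)) + μ)/2)*‖xs - zt i‖^2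
      ≤ (B:ℝ)*F y + (α2*(B:ℝ))*⟪v i, xs - z'⟫
        + ((B:ℝ)*(α3/(2*L)))*‖gradient F y - v i‖^2
        + (α2*(B:ℝ))*P xs + (α2*(B:ℝ)*(Lbar*α2*(B:ℝ))/2)*‖xs - z'‖^2 := by
    intro i
    -- inner product sum over blocks
    have hinnersum : ∑ l, ⟪gradient F y, zil i l - z'⟫ = ⟪gradient F y, zt i - z'⟫ := by
      have h1 : ∀ l, ⟪gradient F y, zil i l - z'⟫
          = ∑ p, gradient F y p * (if p.1 = l then zt i p - z' p else 0) := by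
        intro l
        rw [PiLp.inner_apply]
        refine Finset.sum_congr rfl fun p _ => ?_
        rw [PiLp.sub_apply, hzil i l p]
        by_cases hp : p.1 = l
        · simp [hp, RCLike.inner_apply, conj_trivial]; ring
        · simp [hp, RCLike.inner_apply, conj_trivial]
      rw [Finset.sum_congr rfl fun l _ => h1 l, Finset.sum_comm]
      rw [PiLp.inner_apply]
      refine Finset.sum_congr rfl fun p _ => ?_
      have h2 : ∀ l, gradient F y p * (if p.1 = l then zt i p - z' p else 0)
          = if p.1 = l then gradient F y p * (zt i p - z' p) else 0 := by
        intro l; split <;> simp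
      rw [Finset.sum_congr rfl fun l _ => h2 l, Finset.sum_ite_eq]
      simp [RCLike.inner_apply, conj_trivial, PiLp.sub_apply]; ring
    -- block smoothness applied blockwise
    have hperl : ∀ l, F (xil i l) ≤ F y + (α2*(B:ℝ))*⟪gradient F y, zil i l - z'⟫
        + LB/2*((α2*(B:ℝ))^2*‖zil i l - z'‖^2) := by
      intro l
      have hsupp : ∀ p : Fin B × Fin Ω, p.1 ≠ l → ((α2*(B:ℝ)) • (zil i l - z')) p = 0 := by
        intro p hp
        have hz : zil i l p = z' p := by rw [hzil i l p, if_neg hp]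
        rw [PiLp.smul_apply, PiLp.sub_apply, hz, sub_self, smul_zero]
      have hb := hFblock l y ((α2*(B:ℝ)) • (zil i l - z')) hsupp
      rw [← hxil i l, real_inner_smul_right, norm_smul, Real.norm_eq_abs,
        abs_of_pos (by positivity : (0:ℝ) < α2*(B:ℝ)), mul_pow] at hb
      linarith [hb]
    have h1 : ∑ l, F (xil i l) ≤ (B:ℝ)*F y + (α2*(B:ℝ))*⟪gradient F y, zt i - z'⟫
        + LB/2*((α2*(B:ℝ))^2*‖zt i - z'‖^2) := by
      have hs := Finset.sum_le_sum fun l (_ : l ∈ Finset.univ) => hperl l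
      rw [Finset.sum_add_distrib, Finset.sum_add_distrib, Finset.sum_const,
        Finset.card_univ, Fintype.card_fin, nsmul_eq_mul, ← Finset.mul_sum, hinnersum,
        ← Finset.mul_sum, ← Finset.mul_sum, hSb i] at hs
      linarith [hs]
    -- proximal step inequality
    have hprox := adsg_prox_lower hμ hPsc hη0 (z' - η • v i) (zt i) xs (hzt i)
    have he1 : zt i - (z' - η • v i) = (zt i - z') + η • v i := by module
    have he3 : ⟪zt i - z', xs - zt i⟫
        = (‖xs - z'‖^2 - ‖zt i - z'‖^2 - ‖xs - zt i‖^2)/2 := by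
      have h4 : xs - z' = (zt i - z') + (xs - zt i) := by abel
      have h5 : ‖(zt i - z') + (xs - zt i)‖^2
          = ‖zt i - z'‖^2 + 2*⟪zt i - z', xs - zt i⟫ + ‖xs - zt i‖^2 := norm_add_sq_real _ _
      rw [← h4] at h5
      linarith
    rw [he1, inner_add_left, real_inner_smul_left, he3] at hprox
    have he4 : ⟪v i, xs - zt i⟫ = ⟪v i, xs - z'⟫ - ⟪v i, zt i - z'⟫ := by
      rw [← inner_sub_right]
      congr 1
      abel
    rw [he4] at hprox
    -- hprox : 0 ≤ 1/η * ((W - Si - Ti)/2 + η*(⟪v i, xs-z'⟫ - ⟪v i, zt i - z'⟫)) + P xs - P (zt i) - μ/2 * Ti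
    have he5 : 1/η * ((‖xs - z'‖^2 - ‖zt i - z'‖^2 - ‖xs - zt i‖^2)/2
          + η*(⟪v i, xs - z'⟫ - ⟪v i, zt i - z'⟫))
        = (Lbar*α2*(B:ℝ))*((‖xs - z'‖^2 - ‖zt i - z'‖^2 - ‖xs - zt i‖^2)/2)
          + ⟪v i, xs - z'⟫ - ⟪v i, zt i - z'⟫ := by
      rw [mul_add, ← hKinv]
      field_simp
      try ring
    rw [he5] at hprox
    -- scaled prox inequality
    have hA := mul_le_mul_of_nonneg_left hprox (by positivity : (0:ℝ) ≤ α2*(B:ℝ))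
    rw [mul_zero] at hA
    -- Young's inequality
    have hY0 : α2*⟪gradient F y - v i, zt i - z'⟫
        ≤ α3/(2*L)*‖gradient F y - v i‖^2 + L*α2^2/(2*α3)*‖zt i - z'‖^2 := by
      have hn1 := real_inner_le_norm (gradient F y - v i) (zt i - z')
      have hnn1 : (0:ℝ) ≤ ‖gradient F y - v i‖ := norm_nonneg _
      have hnn2 : (0:ℝ) ≤ ‖zt i - z'‖ := norm_nonneg _
      have h2' : 2*L*α3*(α2*⟪gradient F y - v i, zt i - z'⟫)
          ≤ α3^2*‖gradient F y - v i‖^2 + L^2*α2^2*‖zt i - z'‖^2 := by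
        nlinarith [sq_nonneg (α3*‖gradient F y - v i‖ - L*α2*‖zt i - z'‖),
          mul_le_mul_of_nonneg_left hn1 (by positivity : (0:ℝ) ≤ 2*L*α3*α2)]
      have hkey : α3/(2*L)*‖gradient F y - v i‖^2 + L*α2^2/(2*α3)*‖zt i - z'‖^2
            - α2*⟪gradient F y - v i, zt i - z'⟫
          = (α3^2*‖gradient F y - v i‖^2 + L^2*α2^2*‖zt i - z'‖^2
            - 2*L*α3*(α2*⟪gradient F y - v i, zt i - z'⟫))/(2*L*α3) := by
        field_simp
      have hpos : (0:ℝ) ≤ (α3^2*‖gradient F y - v i‖^2 + L^2*α2^2*‖zt i - z'‖^2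
          - 2*L*α3*(α2*⟪gradient F y - v i, zt i - z'⟫))/(2*L*α3) :=
        div_nonneg (by linarith) (by positivity)
      linarith [hkey, hpos]
    have hY := mul_le_mul_of_nonneg_left hY0 (by positivity : (0:ℝ) ≤ (B:ℝ))
    -- splitting the inner product
    have hsplit : ⟪gradient F y, zt i - z'⟫
        = ⟪gradient F y - v i, zt i - z'⟫ + ⟪v i, zt i - z'⟫ := by
      rw [inner_sub_left]; ring
    have hsplit' : (α2*(B:ℝ))*⟪gradient F y, zt i - z'⟫
        = (α2*(B:ℝ))*⟪gradient F y - v i, zt i - z'⟫ + (α2*(B:ℝ))*⟪v i, zt i - z'⟫ := by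
      rw [hsplit]; ring
    -- coefficient identity for the ‖zt i - z'‖² terms
    have hKid : α2*(B:ℝ)*(Lbar*α2*(B:ℝ)) = 2*(L*α2^2/(2*α3))*(B:ℝ) + LB*(α2*(B:ℝ))^2 := by
      rw [hLbar]
      field_simp
    have hSiEq : (α2*(B:ℝ)*(Lbar*α2*(B:ℝ)))*‖zt i - z'‖^2
        = (2*(L*α2^2/(2*α3))*(B:ℝ) + LB*(α2*(B:ℝ))^2)*‖zt i - z'‖^2 := by rw [hKid]
    linarith [h1, hA, hY, hsplit', hSiEq]
  -- sum the per-sample inequality over i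
  have hsumI := Finset.sum_le_sum fun i (_ : i ∈ Finset.univ) => hPerI i
  rw [Finset.sum_add_distrib, Finset.sum_add_distrib, ← Finset.mul_sum, ← Finset.mul_sum,
    Finset.sum_add_distrib, Finset.sum_add_distrib, Finset.sum_add_distrib,
    Finset.sum_add_distrib, Finset.sum_const, Finset.card_univ, Fintype.card_fin,
    nsmul_eq_mul, ← Finset.mul_sum, ← Finset.mul_sum, Finset.sum_const, Finset.card_univ,
    Fintype.card_fin, nsmul_eq_mul, Finset.sum_const, Finset.card_univ, Fintype.card_fin,
    nsmul_eq_mul] at hsumI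
  -- hsumI : S1 + (α2 B) S2 + c ∑ Ti ≤ n*(B F y) + (α2 B) SV + cQ SQ + n*(α2 B P xs) + n*(c5 W)
  have hSV : (α2*(B:ℝ))*∑ i, ⟪v i, xs - z'⟫ = (α2*(B:ℝ))*((n:ℝ)*⟪gradient F y, xs - z'⟫) := by
    rw [← sum_inner, hsumv, real_inner_smul_left]
  have hSQ : ((B:ℝ)*(α3/(2*L)))*∑ i, ‖gradient F y - v i‖^2
      ≤ (n:ℝ)*(B:ℝ)*α3*(F xt - F y - ⟪gradient F y, xt - y⟫) := by
    have h2' := mul_le_mul_of_nonneg_left hvar (by positivity : (0:ℝ) ≤ (B:ℝ)*(α3/(2*L)))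
    have heq2 : (B:ℝ)*(α3/(2*L))*(2*L*(n:ℝ)*(F xt - F y - ⟪gradient F y, xt - y⟫))
        = (n:ℝ)*(B:ℝ)*α3*(F xt - F y - ⟪gradient F y, xt - y⟫) := by
      field_simp
    linarith [h2', heq2]
  -- convexity (gradient) step
  have hvec : α2*⟪gradient F y, xs - z'⟫ - α3*⟪gradient F y, xt - y⟫
      = α2*⟪gradient F y, xs - y⟫ + α1*⟪gradient F y, x' - y⟫ := by
    have hv2 : α2 • (xs - z') = α3 • (xt - y) + α2 • (xs - y) + α1 • (x' - y) := by
      ext p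
      rw [PiLp.smul_apply, PiLp.sub_apply, PiLp.add_apply, PiLp.add_apply,
        PiLp.smul_apply, PiLp.sub_apply, PiLp.smul_apply, PiLp.sub_apply,
        PiLp.smul_apply, PiLp.sub_apply, hy, PiLp.add_apply, PiLp.add_apply,
        PiLp.smul_apply, PiLp.smul_apply, PiLp.smul_apply]
      simp only [smul_eq_mul]
      linear_combination (α1 * x' p + α2 * z' p + α3 * xt p) * hsum
    have hv3 := congrArg (fun w => ⟪gradient F y, w⟫) hv2
    simp only [inner_add_right, real_inner_smul_right] at hv3
    linarith [hv3]
  have hGrad : (n:ℝ)*(B:ℝ)*(α2*⟪gradient F y, xs - z'⟫) - (n:ℝ)*(B:ℝ)*(α3*⟪gradient F y, xt - y⟫)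
      ≤ (n:ℝ)*(B:ℝ)*(α2*(F xs - F y)) + (n:ℝ)*(B:ℝ)*(α1*(F x' - F y)) := by
    have ha := mul_le_mul_of_nonneg_left (hlow xs) (by positivity : (0:ℝ) ≤ (n:ℝ)*(B:ℝ)*α2)
    have hb' := mul_le_mul_of_nonneg_left (hlow x') (by positivity : (0:ℝ) ≤ (n:ℝ)*(B:ℝ)*α1)
    have hvec' : (n:ℝ)*(B:ℝ)*(α2*⟪gradient F y, xs - z'⟫)
          - (n:ℝ)*(B:ℝ)*(α3*⟪gradient F y, xt - y⟫)
        = (n:ℝ)*(B:ℝ)*α2*⟪gradient F y, xs - y⟫ + (n:ℝ)*(B:ℝ)*α1*⟪gradient F y, x' - y⟫ := by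
      linear_combination ((n:ℝ)*(B:ℝ)) * hvec
    linarith [ha, hb', hvec']
  -- sum of coordinate identity
  have hS3 : ∑ i, ∑ l, ‖xs - zil i l‖^2
      = (n:ℝ)*(((B:ℝ)-1)*‖xs - z'‖^2) + ∑ i, ‖xs - zt i‖^2 := by
    rw [Finset.sum_congr rfl fun i _ => hc_i i, Finset.sum_add_distrib, Finset.sum_const,
      Finset.card_univ, Fintype.card_fin, nsmul_eq_mul]
  -- scalar coefficient identities
  have hθρ : θ * (ρ/2) = (ρ + μ*α2)/2 := by
    rw [hθ]
    field_simp
    try ring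
  have hC1 : (ρ + μ*α2)/2 = α2*(B:ℝ)*((Lbar*α2*(B:ℝ)) + μ)/2 := by rw [hρ]; ring
  have hC1' : ((ρ + μ*α2)/2)*(∑ i, ‖xs - zt i‖^2)
      = (α2*(B:ℝ)*((Lbar*α2*(B:ℝ)) + μ)/2)*(∑ i, ‖xs - zt i‖^2) := by rw [hC1]
  have hC2 : (n:ℝ)*(α2*(B:ℝ)*(Lbar*α2*(B:ℝ))/2) + (n:ℝ)*(((B:ℝ)-1)*((ρ + μ*α2)/2))
      = (n:ℝ)*(B:ℝ)*(ρ/2) := by rw [hρ]; ring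
  have hC2' : ((n:ℝ)*(α2*(B:ℝ)*(Lbar*α2*(B:ℝ))/2))*‖xs - z'‖^2
        + ((n:ℝ)*(((B:ℝ)-1)*((ρ + μ*α2)/2)))*‖xs - z'‖^2
      = ((n:ℝ)*(B:ℝ)*(ρ/2))*‖xs - z'‖^2 := by
    linear_combination ‖xs - z'‖^2 * hC2
  have hS3' : ((ρ + μ*α2)/2)*(∑ i, ∑ l, ‖xs - zil i l‖^2)
      = ((n:ℝ)*(((B:ℝ)-1)*((ρ + μ*α2)/2)))*‖xs - z'‖^2
        + ((ρ + μ*α2)/2)*(∑ i, ‖xs - zt i‖^2) := by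
    linear_combination ((ρ + μ*α2)/2) * hS3
  have hFy : (n:ℝ)*(B:ℝ)*F y = (n:ℝ)*(B:ℝ)*α1*F y + (n:ℝ)*(B:ℝ)*α2*F y
      + (n:ℝ)*(B:ℝ)*α3*F y := by
    linear_combination (-((n:ℝ)*(B:ℝ)*F y)) * hsum
  -- main scaled inequality
  have main : (∑ i, ∑ l, F (xil i l)) + (α2*(B:ℝ))*(∑ i, P (zt i))
        + (n:ℝ)*(B:ℝ)*(α3*P xt) + ((ρ + μ*α2)/2)*(∑ i, ∑ l, ‖xs - zil i l‖^2)
      ≤ (n:ℝ)*(B:ℝ)*(α1*F x' + α3*(F xt + P xt) + α2*(F xs + P xs))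
        + (n:ℝ)*(B:ℝ)*(ρ/2)*‖xs - z'‖^2 := by
    linarith [hsumI, hSV, hSQ, hGrad, hS3', hC1', hC2', hFy]
  -- conclude
  have hnB : (0:ℝ) < (n:ℝ)*(B:ℝ) := mul_pos hn0 hB0
  have hfin := mul_le_mul_of_nonneg_left main (by positivity : (0:ℝ) ≤ 1/((n:ℝ)*(B:ℝ)))
  have hlhs : (1 / ((n : ℝ) * (B : ℝ))) * (∑ i, ∑ l, F (xil i l))
        + (α2 / (n : ℝ)) * ∑ i, P (zt i) + α3 * P xt
        + θ * (ρ / 2) * ((1 / ((n : ℝ) * (B : ℝ))) * ∑ i, ∑ l, ‖xs - zil i l‖ ^ 2)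
      = (1/((n:ℝ)*(B:ℝ))) * ((∑ i, ∑ l, F (xil i l)) + (α2*(B:ℝ))*(∑ i, P (zt i))
        + (n:ℝ)*(B:ℝ)*(α3*P xt) + ((ρ + μ*α2)/2)*(∑ i, ∑ l, ‖xs - zil i l‖^2)) := by
    rw [hθρ]
    field_simp
  have hrhs : (1/((n:ℝ)*(B:ℝ))) * ((n:ℝ)*(B:ℝ)*(α1*F x' + α3*(F xt + P xt) + α2*(F xs + P xs))
        + (n:ℝ)*(B:ℝ)*(ρ/2)*‖xs - z'‖^2)
      = α1 * F x' + α3 * (F xt + P xt) + α2 * (F xs + P xs) + ρ / 2 * ‖xs - z'‖ ^ 2 := by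
    field_simp
  rw [hlhs]
  calc (1/((n:ℝ)*(B:ℝ))) * ((∑ i, ∑ l, F (xil i l)) + (α2*(B:ℝ))*(∑ i, P (zt i))
        + (n:ℝ)*(B:ℝ)*(α3*P xt) + ((ρ + μ*α2)/2)*(∑ i, ∑ l, ‖xs - zil i l‖^2))
      ≤ (1/((n:ℝ)*(B:ℝ))) * ((n:ℝ)*(B:ℝ)*(α1*F x' + α3*(F xt + P xt) + α2*(F xs + P xs))
        + (n:ℝ)*(B:ℝ)*(ρ/2)*‖xs - z'‖^2) := hfin
    _ = _ := hrhs
end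

section
/- Let d = B·Ω with B, Ω positive integers, n ≥ 1, m ≥ 1. Let f_1,…,f_n : ℝ^d → ℝ be differentiable with F = (1/n)Σ_i f_i, let P be block-separable with blocks P_l : ℝ^Ω → ℝ, let η > 0, and suppose p_l : ℝ^Ω → ℝ^Ω is a map such that for every w ∈ ℝ^Ω, p_l(w) minimizes u ↦ η P_l(u) + (1/2)‖u − w‖² over ℝ^Ω. Let α_1, α_2, α_3 be reals with α_1 + α_2 + α_3 = 1, α_1 ≠ 0, α_2 + α_3 ≠ 0, and set γ = α_2/(α_2 + α_3). Fix a snapshot ẋ ∈ ℝ^d, index choices i_1,…,i_m ∈ {1,…,n}, l_1,…,l_m ∈ {1,…,B}, and epoch-start vectors x_0, z_0 ∈ ℝ^d. Define Algorithm I iterates for j = 1,…,m by: y_j = α_1 x_{j−1} + α_2 z_{j−1} + α_3 ẋ; [v_j]_{l_j} = [∇F(ẋ)]_{l_j} + [∇f_{i_j}(y_j) − ∇f_{i_j}(ẋ)]_{l_j}; [z_j]_{l_j} = p_{l_j}([z_{j−1}]_{l_j} − η [v_j]_{l_j}) and [z_j]_{l'} = [z_{j−1}]_{l'} for l' ≠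 l_j; x_j = y_j + α_2 B (z_j − z_{j−1}). Define Algorithm II iterates by: ẑ_0 = z_0 − ẋ, u_0 = x_0 − γ ẑ_0 − ẋ, β_{−1} = 1, β_j = α_1 β_{j−1}; for j = 1,…,m: ȳ_j = β_{j−1} u_{j−1} + γ ẑ_{j−1} + ẋ; [v̇_j]_{l_j} = [∇F(ẋ)]_{l_j} + [∇f_{i_j}(ȳ_j) − ∇f_{i_j}(ẋ)]_{l_j}; [ẑ_j]_{l_j} = p_{l_j}([ẑ_{j−1} + ẋ]_{l_j} − η [v̇_j]_{l_j}) − [ẋ]_{l_j} and [ẑ_j]_{l'} = [ẑ_{j−1}]_{l'} for l' ≠ l_j; u_j = u_{j−1} + ((α_2 B − γ)/β_{j−1})(ẑ_j − ẑ_{j−1}); and set z̄_j = ẑ_j + ẋ and x̄_j = β_{j−1} u_j + γ ẑ_j + ẋ. Then for all j = 1,…,m: y_j = ȳ_j, z_j = z̄_j, and x_j = x̄_j. -/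
/-- Equivalence of ADSG (Algorithm I) and its efficient implementation (Algorithm II)
within one epoch, with the same sample and block choices: for all `j = 1,…,m`,
`y_j = ȳ_j`, `z_j = z̄_j`, and `x_j = x̄_j`. -/
theorem adsg_implementation_equiv
    (B Ω n m : ℕ) (hB : 0 < B) (hΩ : 0 < Ω) (hn : 1 ≤ n) (hm : 1 ≤ m)
    (f : Fin n → EuclideanSpace ℝ (Fin B × Fin Ω) → ℝ)
    (hdiff : ∀ i, Differentiable ℝ (f i))
    (F : EuclideanSpace ℝ (Fin B × Fin Ω) → ℝ)
    (hF : ∀ x, F x = (1 / (n : ℝ)) * ∑ i, f i x)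
    (P : EuclideanSpace ℝ (Fin B × Fin Ω) → ℝ)
    (Pl : Fin B → EuclideanSpace ℝ (Fin Ω) → ℝ)
    (hPsep : ∀ x, P x = ∑ l : Fin B, Pl l (WithLp.toLp 2 (fun o => x (l, o))))
    (η : ℝ) (hη : 0 < η)
    -- the proximal maps of the blocks of `P`
    (p : Fin B → EuclideanSpace ℝ (Fin Ω) → EuclideanSpace ℝ (Fin Ω))
    (hp : ∀ (l : Fin B) (w u : EuclideanSpace ℝ (Fin Ω)),
      η * Pl l (p l w) + 1 / 2 * ‖p l w - w‖ ^ 2 ≤ η * Pl l u + 1 / 2 * ‖u - w‖ ^ 2)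
    (α1 α2 α3 γ : ℝ) (hsum : α1 + α2 + α3 = 1) (hα1 : α1 ≠ 0) (hα23 : α2 + α3 ≠ 0)
    (hγ : γ = α2 / (α2 + α3))
    -- snapshot, sample and block choices, epoch-start vectors
    (xdot : EuclideanSpace ℝ (Fin B × Fin Ω))
    (isel : ℕ → Fin n) (lsel : ℕ → Fin B)
    -- Algorithm I iterates
    (x y z v : ℕ → EuclideanSpace ℝ (Fin B × Fin Ω))
    (hy : ∀ j, 1 ≤ j → j ≤ m →
      y j = α1 • x (j - 1) + α2 • z (j - 1) + α3 • xdot)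
    (hv : ∀ j, 1 ≤ j → j ≤ m → ∀ o : Fin Ω,
      v j (lsel j, o) = gradient F xdot (lsel j, o)
        + (gradient (f (isel j)) (y j) (lsel j, o) - gradient (f (isel j)) xdot (lsel j, o)))
    (hz : ∀ j, 1 ≤ j → j ≤ m → ∀ o : Fin Ω,
      z j (lsel j, o)
        = p (lsel j) (WithLp.toLp 2 (fun o' => z (j - 1) (lsel j, o') - η * v j (lsel j, o'))) o)
    (hzrest : ∀ j, 1 ≤ j → j ≤ m → ∀ q : Fin B × Fin Ω, q.1 ≠ lsel j → z j q = z (j - 1) q)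
    (hx : ∀ j, 1 ≤ j → j ≤ m → x j = y j + (α2 * (B : ℝ)) • (z j - z (j - 1)))
    -- Algorithm II iterates; `βm1 j` denotes `β_{j−1}`, so `βm1 0 = β_{−1} = 1`
    (zhat u vdot ybar zbar xbar : ℕ → EuclideanSpace ℝ (Fin B × Fin Ω))
    (βm1 : ℕ → ℝ) (hβ0 : βm1 0 = 1) (hβrec : ∀ j, βm1 (j + 1) = α1 * βm1 j)
    (hzhat0 : zhat 0 = z 0 - xdot)
    (hu0 : u 0 = x 0 - γ • zhat 0 - xdot)
    (hybar : ∀ j, 1 ≤ j → j ≤ m → ybar j = βm1 j • u (j - 1) + γ • zhat (j - 1) + xdot)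
    (hvdot : ∀ j, 1 ≤ j → j ≤ m → ∀ o : Fin Ω,
      vdot j (lsel j, o) = gradient F xdot (lsel j, o)
        + (gradient (f (isel j)) (ybar j) (lsel j, o) - gradient (f (isel j)) xdot (lsel j, o)))
    (hzhat : ∀ j, 1 ≤ j → j ≤ m → ∀ o : Fin Ω,
      zhat j (lsel j, o)
        = p (lsel j) (WithLp.toLp 2 (fun o' => (zhat (j - 1) + xdot) (lsel j, o') - η * vdot j (lsel j, o'))) o
          - xdot (lsel j, o))
    (hzhatrest : ∀ j, 1 ≤ j → j ≤ m →
      ∀ q : Fin B × Fin Ω, q.1 ≠ lsel j → zhat j q = zhat (j - 1) q)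
    (hu : ∀ j, 1 ≤ j → j ≤ m →
      u j = u (j - 1) + ((α2 * (B : ℝ) - γ) / βm1 j) • (zhat j - zhat (j - 1)))
    (hzbar : ∀ j, 1 ≤ j → j ≤ m → zbar j = zhat j + xdot)
    (hxbar : ∀ j, 1 ≤ j → j ≤ m → xbar j = βm1 j • u j + γ • zhat j + xdot) :
    ∀ j, 1 ≤ j → j ≤ m → y j = ybar j ∧ z j = zbar j ∧ x j = xbar j := by
  have hβne : ∀ j, βm1 j ≠ 0 := by
    intro j
    induction j with
    | zero => simp [hβ0]
    | succ k ih => simp [hβrec, hα1, ih]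
  have hγ2 : α1 * γ + α2 = γ := by
    have h1 : α1 = 1 - (α2 + α3) := by linarith
    rw [hγ, h1]
    field_simp
    ring
  have key : ∀ j, j ≤ m →
      (zhat j = z j - xdot ∧ x j = βm1 j • u j + γ • zhat j + xdot) ∧
      (1 ≤ j → y j = ybar j ∧ z j = zbar j ∧ x j = xbar j) := by
    intro j
    induction j with
    | zero =>
      intro _
      refine ⟨⟨hzhat0, ?_⟩, by omega⟩
      rw [hu0, hβ0]
      ext q
      simp only [PiLp.add_apply, PiLp.sub_apply, PiLp.smul_apply, smul_eq_mul]
      ring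
    | succ k ih =>
      intro hk
      obtain ⟨⟨ihz, ihx⟩, -⟩ := ih (by omega)
      have hk1 : 1 ≤ k + 1 := by omega
      have hsub : k + 1 - 1 = k := rfl
      have hβ : βm1 (k + 1) = α1 * βm1 k := hβrec k
      have hzkk : z k = zhat k + xdot := by rw [ihz]; abel
      -- y agrees
      have hyeq : y (k + 1) = ybar (k + 1) := by
        rw [hy (k + 1) hk1 hk, hybar (k + 1) hk1 hk, hsub, ihx, hzkk]
        ext q
        simp only [PiLp.add_apply, PiLp.smul_apply, smul_eq_mul]
        linear_combination u k q * hβ.symm + zhat k q * hγ2 + xdot q * hsum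
      have hveq : ∀ o : Fin Ω,
          v (k + 1) (lsel (k + 1), o) = vdot (k + 1) (lsel (k + 1), o) := by
        intro o
        rw [hv _ hk1 hk o, hvdot _ hk1 hk o, hyeq]
      -- z agrees
      have hzeq : zhat (k + 1) = z (k + 1) - xdot := by
        ext q
        obtain ⟨l, o⟩ := q
        by_cases hl : l = lsel (k + 1)
        · subst hl
          rw [PiLp.sub_apply, hzhat _ hk1 hk o, hz _ hk1 hk o, hsub]
          have harg : (fun o' => (zhat k + xdot) (lsel (k + 1), o')
                - η * vdot (k + 1) (lsel (k + 1), o'))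
              = (fun o' => z k (lsel (k + 1), o') - η * v (k + 1) (lsel (k + 1), o')) := by
            funext o'
            rw [hveq o', hzkk, PiLp.add_apply]
          rw [harg]
        · rw [PiLp.sub_apply, hzhatrest _ hk1 hk (l, o) hl, hzrest _ hk1 hk (l, o) hl,
            hsub, ihz, PiLp.sub_apply]
      have hz1 : z (k + 1) = zhat (k + 1) + xdot := by rw [hzeq]; abel
      -- x agrees
      have hxeq : x (k + 1) = βm1 (k + 1) • u (k + 1) + γ • zhat (k + 1) + xdot := by
        rw [hx _ hk1 hk, hu _ hk1 hk, hsub, hyeq, hybar _ hk1 hk, hsub, hz1, hzkk]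
        ext q
        simp only [PiLp.add_apply, PiLp.sub_apply, PiLp.smul_apply, smul_eq_mul]
        field_simp [hβne (k + 1)]
        ring
      refine ⟨⟨hzeq, hxeq⟩, fun _ => ⟨hyeq, ?_, ?_⟩⟩
      · rw [hzbar _ hk1 hk, hz1]
      · rw [hxbar _ hk1 hk, hxeq]
  intro j hj1 hjm
  exact (key j hjm).2 hj1
end

section
/- Let d = B·Ω with B, Ω positive integers, let α, c ∈ ℝ, m ≥ 1, and let l_1,…,l_m ∈ {1,…,B} be block choices. Let (ẑ_j)_{j=0}^{m} be vectors in ℝ^d such that for each j ≥ 1, [ẑ_j]_{l'} = [ẑ_{j−1}]_{l'} for all l' ≠ l_j. Define Ξ_0 = ξ_0 ∈ ℝ^d arbitrary and ω_0 = (0,…,0) ∈ ℕ^B, and for j = 1,…,m: Ξ_j = α Ξ_{j−1} + c (ẑ_j − ẑ_{j−1}); [ξ_j]_{l_j} = α^{ω_{j−1}(l_j)+1} [ξ_{j−1}]_{l_j} + c [ẑ_j − ẑ_{j−1}]_{l_j} and [ξ_j]_{l'} = [ξ_{j−1}]_{l'} for l' ≠ l_j; ω_j(l_j) = 0 and ω_j(l')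 = ω_{j−1}(l') + 1 for l' ≠ l_j. Then for every j = 0,…,m and every block l: [Ξ_j]_l = α^{ω_j(l)} [ξ_j]_l. -/
/-- Correctness of the lazy update of the ADSG momentum variable: with the exact
recursion `Ξ_j = α Ξ_{j−1} + c (ẑ_j − ẑ_{j−1})` and the lazy iterates `ξ_j` with
per-block staleness counters `w_j`, one has `[Ξ_j]_l = α^{w_j(l)} [ξ_j]_l` for all
`j = 0,…,m` and all blocks `l`. -/
theorem adsg_lazy_update
    (B Ω m : ℕ) (hB : 0 < B) (hΩ : 0 < Ω) (hm : 1 ≤ m)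
    (α c : ℝ) (lsel : ℕ → Fin B)
    (zhat Ξ ξ : ℕ → EuclideanSpace ℝ (Fin B × Fin Ω))
    (w : ℕ → Fin B → ℕ)
    (hzhat_rest : ∀ j, 1 ≤ j → j ≤ m →
      ∀ q : Fin B × Fin Ω, q.1 ≠ lsel j → zhat j q = zhat (j - 1) q)
    (hΞ0 : Ξ 0 = ξ 0)
    (hw0 : ∀ l, w 0 l = 0)
    (hΞ : ∀ j, 1 ≤ j → j ≤ m → Ξ j = α • Ξ (j - 1) + c • (zhat j - zhat (j - 1)))
    (hξ : ∀ j, 1 ≤ j → j ≤ m → ∀ o : Fin Ω,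
      ξ j (lsel j, o) = α ^ (w (j - 1) (lsel j) + 1) * ξ (j - 1) (lsel j, o)
        + c * (zhat j (lsel j, o) - zhat (j - 1) (lsel j, o)))
    (hξrest : ∀ j, 1 ≤ j → j ≤ m →
      ∀ q : Fin B × Fin Ω, q.1 ≠ lsel j → ξ j q = ξ (j - 1) q)
    (hwsel : ∀ j, 1 ≤ j → j ≤ m → w j (lsel j) = 0)
    (hwrest : ∀ j, 1 ≤ j → j ≤ m → ∀ l : Fin B, l ≠ lsel j → w j l = w (j - 1) l + 1) :
    ∀ j, j ≤ m → ∀ q : Fin B × Fin Ω, Ξ j q = α ^ (w j q.1) * ξ j q := by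
  intro j
  induction j with
  | zero =>
    intro _ q
    simp [hΞ0, hw0]
  | succ n ih =>
    intro hle q
    have h1 : 1 ≤ n + 1 := Nat.le_add_left 1 n
    have hprev : n ≤ m := Nat.le_of_succ_le hle
    have hsub : n + 1 - 1 = n := rfl
    have hΞeval : Ξ (n + 1) q = α * Ξ n q + c * (zhat (n + 1) q - zhat n q) := by
      have := hΞ (n + 1) h1 hle
      rw [this]
      simp [hsub]
    by_cases hq : q.1 = lsel (n + 1)
    · obtain ⟨l, o⟩ := q
      simp only at hq
      subst hq
      rw [hΞeval, ih hprev _, hξ (n + 1) h1 hle o, hwsel (n + 1) h1 hle, hsub]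
      simp [pow_succ]
      ring
    · have hwr := hwrest (n + 1) h1 hle q.1 hq
      have hξr := hξrest (n + 1) h1 hle q hq
      have hzr := hzhat_rest (n + 1) h1 hle q hq
      rw [hΞeval, ih hprev q, hwr, hξr, hzr]
      simp [pow_succ]
      ring
end

section
/- Let m ≥ 1 be an integer, θ > 0, and α_1, α_3 ≥ 0 reals with 1 − α_1 θ ≥ α_3 θ^m. Let D_0, D_1, …, D_m and A_0, A_1, …, A_m be reals, T a real, and T' ≥ 0 a real such that T' · Σ_{j=1}^{m} θ^{j−1} ≤ Σ_{j=1}^{m} θ^{j−1} D_j. If D_j + θ A_j ≤ α_3 T + α_1 D_{j−1} + A_{j−1} holds for every j = 1,…,m, then θ^m ( α_3 T' Σ_{j=0}^{m−1} θ^j + α_1 D_m + A_m ) ≤ α_1 D_0 + α_3 T Σ_{j=0}^{m−1} θ^j + A_0. -/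
/-- Epoch-level recursion of the ADSG convergence proof: if
`D_j + θ A_j ≤ α₃ T + α₁ D_{j−1} + A_{j−1}` for `j = 1,…,m`, `1 − α₁ θ ≥ α₃ θ^m`,
and `T' Σ_{j=1}^m θ^{j−1} ≤ Σ_{j=1}^m θ^{j−1} D_j` with `T' ≥ 0`, then
`θ^m (α₃ T' Σ_{j=0}^{m−1} θ^j + α₁ D_m + A_m) ≤ α₁ D_0 + α₃ T Σ_{j=0}^{m−1} θ^j + A_0`. -/
theorem adsg_epoch_recursion (m : ℕ) (hm : 1 ≤ m) (θ α1 α3 : ℝ)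
    (hθ : 0 < θ) (hα1 : 0 ≤ α1) (hα3 : 0 ≤ α3)
    (hcontr : α3 * θ ^ m ≤ 1 - α1 * θ)
    (D A : ℕ → ℝ) (T T' : ℝ) (hT' : 0 ≤ T')
    (hT'le : T' * ∑ j ∈ Finset.range m, θ ^ j ≤ ∑ j ∈ Finset.range m, θ ^ j * D (j + 1))
    (hrec : ∀ j, 1 ≤ j → j ≤ m → D j + θ * A j ≤ α3 * T + α1 * D (j - 1) + A (j - 1)) :
    θ ^ m * (α3 * T' * ∑ j ∈ Finset.range m, θ ^ j + α1 * D m + A m)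
      ≤ α1 * D 0 + α3 * T * ∑ j ∈ Finset.range m, θ ^ j + A 0 := by
  set S := ∑ j ∈ Finset.range m, θ ^ j with hS
  set SD1 := ∑ j ∈ Finset.range m, θ ^ j * D (j + 1) with hSD1
  set SD0 := ∑ j ∈ Finset.range m, θ ^ j * D j with hSD0
  set SA1 := ∑ j ∈ Finset.range m, θ ^ (j + 1) * A (j + 1) with hSA1
  set SA0 := ∑ j ∈ Finset.range m, θ ^ j * A j with hSA0
  have hSnn : 0 ≤ S := Finset.sum_nonneg fun j _ => (pow_pos hθ j).le
  -- telescoping identities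
  have tele1 : SA1 - SA0 = θ ^ m * A m - A 0 := by
    have := Finset.sum_range_sub (fun j => θ ^ j * A j) m
    rw [hSA1, hSA0, ← Finset.sum_sub_distrib, this]; ring
  have tele2 : θ * SD1 - SD0 = θ ^ m * D m - D 0 := by
    have := Finset.sum_range_sub (fun j => θ ^ j * D j) m
    have h' : ∑ j ∈ Finset.range m, (θ ^ (j + 1) * D (j + 1) - θ ^ j * D j)
        = θ * SD1 - SD0 := by
      rw [Finset.sum_sub_distrib, hSD1, hSD0, Finset.mul_sum]
      congr 1
      exact Finset.sum_congr rfl fun j _ => by ring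
    rw [← h', this]; ring
  -- weighted sum of the recursion
  have e3 : ∑ j ∈ Finset.range m, θ ^ j * (α3 * T) = α3 * T * S := by
    rw [hS, Finset.mul_sum]; exact Finset.sum_congr rfl fun j _ => mul_comm _ _
  have e4 : ∑ j ∈ Finset.range m, α1 * (θ ^ j * D j) = α1 * SD0 := by
    rw [hSD0, Finset.mul_sum]
  have hsum : SD1 + SA1 ≤ α3 * T * S + α1 * SD0 + SA0 := by
    have key : ∀ j ∈ Finset.range m,
        θ ^ j * D (j + 1) + θ ^ (j + 1) * A (j + 1)
          ≤ θ ^ j * (α3 * T) + α1 * (θ ^ j * D j) + θ ^ j * A j := by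
      intro j hj
      have hj' := hrec (j + 1) (Nat.le_add_left 1 j) (Finset.mem_range.mp hj)
      simp only [Nat.add_sub_cancel] at hj'
      have hθj : (0:ℝ) ≤ θ ^ j := (pow_pos hθ j).le
      calc θ ^ j * D (j + 1) + θ ^ (j + 1) * A (j + 1)
          = θ ^ j * (D (j + 1) + θ * A (j + 1)) := by ring
        _ ≤ θ ^ j * (α3 * T + α1 * D j + A j) := mul_le_mul_of_nonneg_left hj' hθj
        _ = θ ^ j * (α3 * T) + α1 * (θ ^ j * D j) + θ ^ j * A j := by ring
    have h := Finset.sum_le_sum key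
    rw [Finset.sum_add_distrib, Finset.sum_add_distrib, Finset.sum_add_distrib,
      e3, e4] at h
    exact h
  have hSD1nn : 0 ≤ SD1 := le_trans (mul_nonneg hT' hSnn) hT'le
  have hθm : (0:ℝ) ≤ θ ^ m := (pow_pos hθ m).le
  nlinarith [mul_le_mul_of_nonneg_left hT'le (mul_nonneg hα3 hθm),
    mul_nonneg (sub_nonneg.mpr hcontr) hSD1nn]
end

section
/- Let y₀ ∈ {−1, 1}, λ > 0, and α ∈ ℝ. Then the supremum of the set { α·β − y₀·β − (λ/2)·β² : β ∈ ℝ, −1 ≤ y₀·β ≤ 0 } equals: 0 if y₀·α > 1; (y₀·α − 1)²/(2λ) if 1 − λ ≤ y₀·α ≤ 1; and 1 − y₀·α − λ/2 if y₀·α < 1 − λ. -/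
private lemma hinge_aux (lam a : ℝ) (hlam : 0 < lam) :
    (1 < a →
      sSup ((fun t : ℝ => (a - 1) * t - lam / 2 * t ^ 2) '' Set.Icc (-1) 0) = 0) ∧
    (1 - lam ≤ a → a ≤ 1 →
      sSup ((fun t : ℝ => (a - 1) * t - lam / 2 * t ^ 2) '' Set.Icc (-1) 0)
        = (a - 1) ^ 2 / (2 * lam)) ∧
    (a < 1 - lam →
      sSup ((fun t : ℝ => (a - 1) * t - lam / 2 * t ^ 2) '' Set.Icc (-1) 0)
        = 1 - a - lam / 2) := by
  refine ⟨fun h => ?_, fun h1 h2 => ?_, fun h => ?_⟩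
  · apply IsGreatest.csSup_eq
    constructor
    · exact ⟨0, ⟨by norm_num, le_refl 0⟩, by norm_num⟩
    · rintro x ⟨t, ⟨ht1, ht2⟩, rfl⟩
      simp only
      nlinarith [mul_nonneg (by linarith : (0:ℝ) ≤ a - 1) (by linarith : (0:ℝ) ≤ -t),
        mul_nonneg hlam.le (sq_nonneg t)]
  · apply IsGreatest.csSup_eq
    constructor
    · refine ⟨(a - 1) / lam, ⟨?_, ?_⟩, ?_⟩
      · rw [le_div_iff₀ hlam]; linarith
      · exact div_nonpos_iff.mpr (Or.inr ⟨by linarith, hlam.le⟩)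
      · simp only
        field_simp
        ring
    · rintro x ⟨t, ⟨ht1, ht2⟩, rfl⟩
      simp only
      rw [le_div_iff₀ (by positivity : (0:ℝ) < 2 * lam)]
      nlinarith [sq_nonneg (a - 1 - lam * t)]
  · apply IsGreatest.csSup_eq
    constructor
    · exact ⟨-1, ⟨le_refl _, by norm_num⟩, by ring⟩
    · rintro x ⟨t, ⟨ht1, ht2⟩, rfl⟩
      simp only
      have h2 : (0:ℝ) ≤ lam / 2 * (t - 1) - (a - 1) := by
        nlinarith [mul_nonneg hlam.le (by linarith : (0:ℝ) ≤ t + 1)]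
      nlinarith [mul_nonneg (by linarith : (0:ℝ) ≤ t + 1) h2]

/-- λ-smoothing of the hinge loss with label `y₀ ∈ {−1,1}`:
`sup { αβ − y₀β − (λ/2)β² : −1 ≤ y₀β ≤ 0 }` equals the smoothed hinge loss. -/
theorem smoothed_hinge (y₀ lam α : ℝ) (hy : y₀ = -1 ∨ y₀ = 1) (hlam : 0 < lam) :
    (1 < y₀ * α →
      sSup ((fun β : ℝ => α * β - y₀ * β - lam / 2 * β ^ 2) ''
        {β : ℝ | -1 ≤ y₀ * β ∧ y₀ * β ≤ 0}) = 0) ∧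
    (1 - lam ≤ y₀ * α → y₀ * α ≤ 1 →
      sSup ((fun β : ℝ => α * β - y₀ * β - lam / 2 * β ^ 2) ''
        {β : ℝ | -1 ≤ y₀ * β ∧ y₀ * β ≤ 0}) = (y₀ * α - 1) ^ 2 / (2 * lam)) ∧
    (y₀ * α < 1 - lam →
      sSup ((fun β : ℝ => α * β - y₀ * β - lam / 2 * β ^ 2) ''
        {β : ℝ | -1 ≤ y₀ * β ∧ y₀ * β ≤ 0}) = 1 - y₀ * α - lam / 2) := by
  have hy2 : y₀ * y₀ = 1 := by rcases hy with h | h <;> subst h <;> norm_num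
  have himg : ((fun β : ℝ => α * β - y₀ * β - lam / 2 * β ^ 2) ''
        {β : ℝ | -1 ≤ y₀ * β ∧ y₀ * β ≤ 0})
      = ((fun t : ℝ => (y₀ * α - 1) * t - lam / 2 * t ^ 2) '' Set.Icc (-1) 0) := by
    ext x
    constructor
    · rintro ⟨β, ⟨h1, h2⟩, rfl⟩
      exact ⟨y₀ * β, ⟨h1, h2⟩, by
        simp only
        linear_combination (α * β - lam / 2 * β ^ 2) * hy2⟩
    · rintro ⟨t, ⟨h1, h2⟩, rfl⟩
      refine ⟨y₀ * t, ⟨?_, ?_⟩, ?_⟩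
      · simpa [← mul_assoc, hy2] using h1
      · simpa [← mul_assoc, hy2] using h2
      · simp only
        linear_combination (-t - lam / 2 * t ^ 2) * hy2
  rw [himg]
  exact hinge_aux lam (y₀ * α) hlam
end
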